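/- Let (γ, ν₁, ν₂) and (γ̃, ν̃₁, ν̃₂) be non-parabolic spatial hybrid framed curves on an interval I with the same curvature (l, m, n, α) and the same signs δ₁, δ₂. Then they are congruent through a spatial hybrid motion: there exist A with AᵀGA = G, det A = 1, and H₀ ∈ H^p, such that γ̃ = Aγ + H₀, ν̃₁ = Aν₁, ν̃₂ = Aν₂ on I. -/

import Mathlib

open Real Matrix

noncomputable section

/-- Scalar product on the spatial hybrid number space, coordinates (b,c,d). -/
def g (x y : Fin 3 → ℝ) : ℝ := x 0 * y 0 - x 0 * y 1 - y 0 * x 1 - x 2 * y 2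

/-- Hybridian product of g-orthogonal spatial hybrid numbers. -/
def hprod (x y : Fin 3 → ℝ) : Fin 3 → ℝ :=
  ![x 0 * y 2 - y 0 * x 2, x 0 * y 2 - y 0 * x 2 - x 1 * y 2 + y 1 * x 2,
    y 0 * x 1 - x 0 * y 1]

/-- Gram matrix of g. -/
def Gmat : Matrix (Fin 3) (Fin 3) ℝ := !![1, -1, 0; -1, 0, 0; 0, 0, -1]

/-- row functional of `Gmat` applied to `v`. -/
def gv (v : Fin 3 → ℝ) : Fin 3 → ℝ := ![v 0 - v 1, -v 0, -v 2]

/-- candidate motion matrix built from two frames. -/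
def Mf (d₁ d₂ : ℝ) (u₁ u₂ u₃ v₁ v₂ v₃ : Fin 3 → ℝ) : Matrix (Fin 3) (Fin 3) ℝ :=
  Matrix.of fun i j => d₁ * u₁ i * gv v₁ j + d₂ * u₂ i * gv v₂ j + (d₁*d₂) * u₃ i * gv v₃ j

lemma g_symm (x y : Fin 3 → ℝ) : g x y = g y x := by simp [g]; ring

lemma g_hp_left (x y : Fin 3 → ℝ) : g (hprod x y) x = 0 := by simp [g, hprod]; ring

lemma g_hp_right (x y : Fin 3 → ℝ) : g (hprod x y) y = 0 := by simp [g, hprod]; ring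

lemma g_hp_self {x y : Fin 3 → ℝ} {d₁ d₂ : ℝ} (h1 : g x x = d₁) (h2 : g y y = d₂)
    (h3 : g x y = 0) : g (hprod x y) (hprod x y) = d₁ * d₂ := by
  have h : g (hprod x y) (hprod x y) = g x x * g y y - g x y * g x y := by
    simp [g, hprod]; ring
  rw [h, h1, h2, h3]; ring

lemma Mf_mulVec {d₁ d₂ : ℝ} (u₁ u₂ u₃ : Fin 3 → ℝ) {v₁ v₂ v₃ x : Fin 3 → ℝ}
    {c1 c2 c3 : ℝ} (hx1 : g v₁ x = c1) (hx2 : g v₂ x = c2) (hx3 : g v₃ x = c3) :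
    (Mf d₁ d₂ u₁ u₂ u₃ v₁ v₂ v₃).mulVec x
      = (d₁*c1) • u₁ + (d₂*c2) • u₂ + (d₁*d₂*c3) • u₃ := by
  simp only [g] at hx1 hx2 hx3
  funext i
  simp only [Mf, Matrix.mulVec, dotProduct, Fin.sum_univ_three, Matrix.of_apply,
    gv, Matrix.cons_val_zero, Matrix.cons_val_one, Matrix.head_cons, Pi.add_apply,
    Pi.smul_apply, smul_eq_mul, Matrix.cons_val_two, Matrix.tail_cons]
  linear_combination (d₁ * u₁ i) * hx1 + (d₂ * u₂ i) * hx2 + (d₁*d₂*u₃ i) * hx3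

lemma mu_deriv {x y : ℝ → Fin 3 → ℝ} {lt mt nt d₁ d₂ : ℝ} {t : ℝ}
    (hx : HasDerivAt x (lt • y t + mt • hprod (x t) (y t)) t)
    (hy : HasDerivAt y ((-(d₁*d₂)*lt) • x t + nt • hprod (x t) (y t)) t)
    (h1 : g (x t) (x t) = d₁) (h2 : g (y t) (y t) = d₂) (h3 : g (x t) (y t) = 0) :
    HasDerivAt (fun s => hprod (x s) (y s))
      ((-(d₂*mt)) • x t + (-(d₁*nt)) • y t) t := by
  simp only [g] at h1 h2 h3
  have hx' : ∀ k, HasDerivAt (fun s => x s k) ((lt • y t + mt • hprod (x t) (y t)) k) t :=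
    hasDerivAt_pi.mp hx
  have hy' : ∀ k, HasDerivAt (fun s => y s k)
      (((-(d₁*d₂)*lt) • x t + nt • hprod (x t) (y t)) k) t := hasDerivAt_pi.mp hy
  rw [hasDerivAt_pi]
  intro k
  fin_cases k
  · show HasDerivAt (fun s => hprod (x s) (y s) 0) (((-(d₂*mt)) • x t + (-(d₁*nt)) • y t) 0) t
    simp only [hprod, Matrix.cons_val_zero]
    refine (((hx' 0).mul (hy' 2)).sub ((hy' 0).mul (hx' 2))).congr_deriv (Eq.symm ?_)
    simp only [hprod, Pi.add_apply, Pi.smul_apply, smul_eq_mul, Matrix.cons_val_zero,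
      Matrix.cons_val_one, Matrix.head_cons, Matrix.cons_val_two, Matrix.tail_cons]
    linear_combination (-(mt * y t 0) - nt * x t 0) * h3 + (mt * x t 0) * h2 + (nt * y t 0) * h1
  · show HasDerivAt (fun s => hprod (x s) (y s) 1) (((-(d₂*mt)) • x t + (-(d₁*nt)) • y t) 1) t
    simp only [hprod, Matrix.cons_val_one, Matrix.head_cons]
    refine ((((((hx' 0).mul (hy' 2)).sub ((hy' 0).mul (hx' 2))).sub
      ((hx' 1).mul (hy' 2))).add ((hy' 1).mul (hx' 2))).congr_deriv (Eq.symm ?_))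
    simp only [hprod, Pi.add_apply, Pi.smul_apply, smul_eq_mul, Matrix.cons_val_zero,
      Matrix.cons_val_one, Matrix.head_cons, Matrix.cons_val_two, Matrix.tail_cons]
    linear_combination (-(mt * y t 1) - nt * x t 1) * h3 + (mt * x t 1) * h2 + (nt * y t 1) * h1
  · show HasDerivAt (fun s => hprod (x s) (y s) 2) (((-(d₂*mt)) • x t + (-(d₁*nt)) • y t) 2) t
    simp only [hprod, Matrix.cons_val_two, Matrix.tail_cons, Matrix.head_cons]
    refine (((hy' 0).mul (hx' 1)).sub ((hx' 0).mul (hy' 1))).congr_deriv (Eq.symm ?_)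
    simp only [hprod, Pi.add_apply, Pi.smul_apply, smul_eq_mul, Matrix.cons_val_zero,
      Matrix.cons_val_one, Matrix.head_cons, Matrix.cons_val_two, Matrix.tail_cons]
    linear_combination (-(mt * y t 2) - nt * x t 2) * h3 + (mt * x t 2) * h2 + (nt * y t 2) * h1

lemma entry_deriv {d₁ d₂ lt mt nt : ℝ} (h1 : d₁*d₁ = 1) (h2 : d₂*d₂ = 1)
    {u₁ u₂ u₃ v₁ v₂ v₃ : ℝ → Fin 3 → ℝ} {t : ℝ}
    (hu₁ : HasDerivAt u₁ (lt • u₂ t + mt • u₃ t) t)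
    (hu₂ : HasDerivAt u₂ ((-(d₁*d₂)*lt) • u₁ t + nt • u₃ t) t)
    (hu₃ : HasDerivAt u₃ ((-(d₂*mt)) • u₁ t + (-(d₁*nt)) • u₂ t) t)
    (hv₁ : HasDerivAt v₁ (lt • v₂ t + mt • v₃ t) t)
    (hv₂ : HasDerivAt v₂ ((-(d₁*d₂)*lt) • v₁ t + nt • v₃ t) t)
    (hv₃ : HasDerivAt v₃ ((-(d₂*mt)) • v₁ t + (-(d₁*nt)) • v₂ t) t)
    (i j : Fin 3) :
    HasDerivAt (fun s => Mf d₁ d₂ (u₁ s) (u₂ s) (u₃ s) (v₁ s) (v₂ s) (v₃ s) i j) 0 t := by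
  have a1 := hasDerivAt_pi.mp hu₁
  have a2 := hasDerivAt_pi.mp hu₂
  have a3 := hasDerivAt_pi.mp hu₃
  have b1 := hasDerivAt_pi.mp hv₁
  have b2 := hasDerivAt_pi.mp hv₂
  have b3 := hasDerivAt_pi.mp hv₃
  simp only [Pi.add_apply, Pi.smul_apply, smul_eq_mul] at a1 a2 a3 b1 b2 b3
  fin_cases j
  · show HasDerivAt (fun s => Mf d₁ d₂ (u₁ s) (u₂ s) (u₃ s) (v₁ s) (v₂ s) (v₃ s) i 0) 0 t
    simp only [Mf, Matrix.of_apply, gv, Matrix.cons_val_zero, Matrix.cons_val_one,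
      Matrix.head_cons, Matrix.cons_val_two, Matrix.tail_cons]
    refine (((((a1 i).const_mul d₁).mul ((b1 0).sub (b1 1))).add (((a2 i).const_mul d₂).mul ((b2 0).sub (b2 1)))).add (((a3 i).const_mul (d₁*d₂)).mul ((b3 0).sub (b3 1)))).congr_deriv (Eq.symm ?_)
    simp only [Pi.sub_apply, Pi.neg_apply]
    linear_combination (d₁*lt*(u₂ t i*(v₁ t 0 - v₁ t 1) + u₁ t i*(v₂ t 0 - v₂ t 1)) + d₁*mt*(u₃ t i*(v₁ t 0 - v₁ t 1) + u₁ t i*(v₃ t 0 - v₃ t 1)))*h2 + (d₂*nt*(u₃ t i*(v₂ t 0 - v₂ t 1) + u₂ t i*(v₃ t 0 - v₃ t 1)))*h1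
  · show HasDerivAt (fun s => Mf d₁ d₂ (u₁ s) (u₂ s) (u₃ s) (v₁ s) (v₂ s) (v₃ s) i 1) 0 t
    simp only [Mf, Matrix.of_apply, gv, Matrix.cons_val_zero, Matrix.cons_val_one,
      Matrix.head_cons, Matrix.cons_val_two, Matrix.tail_cons]
    refine (((((a1 i).const_mul d₁).mul ((b1 0).neg)).add (((a2 i).const_mul d₂).mul ((b2 0).neg))).add (((a3 i).const_mul (d₁*d₂)).mul ((b3 0).neg))).congr_deriv (Eq.symm ?_)
    simp only [Pi.sub_apply, Pi.neg_apply]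
    linear_combination (d₁*lt*(u₂ t i*(-(v₁ t 0)) + u₁ t i*(-(v₂ t 0))) + d₁*mt*(u₃ t i*(-(v₁ t 0)) + u₁ t i*(-(v₃ t 0))))*h2 + (d₂*nt*(u₃ t i*(-(v₂ t 0)) + u₂ t i*(-(v₃ t 0))))*h1
  · show HasDerivAt (fun s => Mf d₁ d₂ (u₁ s) (u₂ s) (u₃ s) (v₁ s) (v₂ s) (v₃ s) i 2) 0 t
    simp only [Mf, Matrix.of_apply, gv, Matrix.cons_val_zero, Matrix.cons_val_one,
      Matrix.head_cons, Matrix.cons_val_two, Matrix.tail_cons]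
    refine (((((a1 i).const_mul d₁).mul ((b1 2).neg)).add (((a2 i).const_mul d₂).mul ((b2 2).neg))).add (((a3 i).const_mul (d₁*d₂)).mul ((b3 2).neg))).congr_deriv (Eq.symm ?_)
    simp only [Pi.sub_apply, Pi.neg_apply]
    linear_combination (d₁*lt*(u₂ t i*(-(v₁ t 2)) + u₁ t i*(-(v₂ t 2))) + d₁*mt*(u₃ t i*(-(v₁ t 2)) + u₁ t i*(-(v₃ t 2))))*h2 + (d₂*nt*(u₃ t i*(-(v₂ t 2)) + u₂ t i*(-(v₃ t 2))))*h1

lemma const_of_derivZero {E : Type*} [NormedAddCommGroup E] [NormedSpace ℝ E]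
    {I : Set ℝ} (hI : Convex ℝ I) {f : ℝ → E} (hf : ∀ t ∈ I, HasDerivAt f 0 t)
    {a b : ℝ} (ha : a ∈ I) (hb : b ∈ I) : f a = f b := by
  have h := hI.norm_image_sub_le_of_norm_hasDerivWithin_le (f' := fun _ => (0:E)) (C := 0)
    (fun x hx => (hf x hx).hasDerivWithinAt) (fun x hx => by simp) hb ha
  have h0 : ‖f a - f b‖ ≤ 0 := by simpa using h
  have := le_antisymm h0 (norm_nonneg _)
  rwa [norm_eq_zero, sub_eq_zero] at this
/-- Uniqueness: two non-parabolic spatial hybrid framed curves on an interval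
with the same curvature (l, m, n, α) and the same signs δ₁, δ₂ are congruent
through a spatial hybrid motion. -/
theorem stmt17 (I : Set ℝ) (hI : Convex ℝ I) (hne : I.Nonempty)
    (l m n α : ℝ → ℝ) (δ₁ δ₂ : ℝ)
    (hδ₁ : δ₁ = 1 ∨ δ₁ = -1) (hδ₂ : δ₂ = 1 ∨ δ₂ = -1)
    (γ ν₁ ν₂ μ γt ν₁t ν₂t μt : ℝ → Fin 3 → ℝ)
    (hμ : ∀ t, μ t = hprod (ν₁ t) (ν₂ t))
    (hμt : ∀ t, μt t = hprod (ν₁t t) (ν₂t t))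
    (hu₁ : ∀ t ∈ I, g (ν₁ t) (ν₁ t) = δ₁)
    (hu₂ : ∀ t ∈ I, g (ν₂ t) (ν₂ t) = δ₂)
    (ho : ∀ t ∈ I, g (ν₁ t) (ν₂ t) = 0)
    (hut₁ : ∀ t ∈ I, g (ν₁t t) (ν₁t t) = δ₁)
    (hut₂ : ∀ t ∈ I, g (ν₂t t) (ν₂t t) = δ₂)
    (hot : ∀ t ∈ I, g (ν₁t t) (ν₂t t) = 0)
    (hode₁ : ∀ t ∈ I, HasDerivAt ν₁ (l t • ν₂ t + m t • μ t) t)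
    (hode₂ : ∀ t ∈ I, HasDerivAt ν₂ ((-(δ₁ * δ₂) * l t) • ν₁ t + n t • μ t) t)
    (hodeγ : ∀ t ∈ I, HasDerivAt γ (α t • μ t) t)
    (hodet₁ : ∀ t ∈ I, HasDerivAt ν₁t (l t • ν₂t t + m t • μt t) t)
    (hodet₂ : ∀ t ∈ I, HasDerivAt ν₂t ((-(δ₁ * δ₂) * l t) • ν₁t t + n t • μt t) t)
    (hodetγ : ∀ t ∈ I, HasDerivAt γt (α t • μt t) t) :
    ∃ A : Matrix (Fin 3) (Fin 3) ℝ, ∃ H₀ : Fin 3 → ℝ,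
      Aᵀ * Gmat * A = Gmat ∧ A.det = 1 ∧
      ∀ t ∈ I, γt t = A.mulVec (γ t) + H₀ ∧
        ν₁t t = A.mulVec (ν₁ t) ∧ ν₂t t = A.mulVec (ν₂ t) := by
  obtain ⟨t₀, ht₀⟩ := hne
  have hδ₁sq : δ₁ * δ₁ = 1 := by rcases hδ₁ with rfl | rfl <;> norm_num
  have hδ₂sq : δ₂ * δ₂ = 1 := by rcases hδ₂ with rfl | rfl <;> norm_num
  have hδδ : δ₁ * δ₂ ≠ 0 := by
    rcases hδ₁ with rfl | rfl <;> rcases hδ₂ with rfl | rfl <;> norm_num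
  have hμfun : μ = fun s => hprod (ν₁ s) (ν₂ s) := funext hμ
  have hμtfun : μt = fun s => hprod (ν₁t s) (ν₂t s) := funext hμt
  -- frame-form derivative of μ and μt
  have hodeμ : ∀ t ∈ I, HasDerivAt μ ((-(δ₂ * m t)) • ν₁ t + (-(δ₁ * n t)) • ν₂ t) t := by
    intro t ht
    have h₁ := hode₁ t ht
    have h₂ := hode₂ t ht
    rw [hμ t] at h₁ h₂
    rw [hμfun]
    exact mu_deriv h₁ h₂ (hu₁ t ht) (hu₂ t ht) (ho t ht)
  have hodeμt : ∀ t ∈ I, HasDerivAt μt ((-(δ₂ * m t)) • ν₁t t + (-(δ₁ * n t)) • ν₂t t) t := by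
    intro t ht
    have h₁ := hodet₁ t ht
    have h₂ := hodet₂ t ht
    rw [hμt t] at h₁ h₂
    rw [hμtfun]
    exact mu_deriv h₁ h₂ (hut₁ t ht) (hut₂ t ht) (hot t ht)
  set A : Matrix (Fin 3) (Fin 3) ℝ :=
    Mf δ₁ δ₂ (ν₁t t₀) (ν₂t t₀) (μt t₀) (ν₁ t₀) (ν₂ t₀) (μ t₀) with hAdef
  -- the matrix function is constant
  have hMconst : ∀ t ∈ I, Mf δ₁ δ₂ (ν₁t t) (ν₂t t) (μt t) (ν₁ t) (ν₂ t) (μ t) = A := by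
    intro t ht
    ext i j
    exact const_of_derivZero hI
      (f := fun s => Mf δ₁ δ₂ (ν₁t s) (ν₂t s) (μt s) (ν₁ s) (ν₂ s) (μ s) i j)
      (fun s hs => entry_deriv hδ₁sq hδ₂sq (hodet₁ s hs) (hodet₂ s hs) (hodeμt s hs)
        (hode₁ s hs) (hode₂ s hs) (hodeμ s hs) i j) ht ht₀
  -- mapping property
  have hmap : ∀ t ∈ I,
      (Mf δ₁ δ₂ (ν₁t t) (ν₂t t) (μt t) (ν₁ t) (ν₂ t) (μ t)).mulVec (ν₁ t) = ν₁t t ∧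
      (Mf δ₁ δ₂ (ν₁t t) (ν₂t t) (μt t) (ν₁ t) (ν₂ t) (μ t)).mulVec (ν₂ t) = ν₂t t ∧
      (Mf δ₁ δ₂ (ν₁t t) (ν₂t t) (μt t) (ν₁ t) (ν₂ t) (μ t)).mulVec (μ t) = μt t := by
    intro t ht
    have hgμν₁ : g (μ t) (ν₁ t) = 0 := by rw [hμ t]; exact g_hp_left _ _
    have hgμν₂ : g (μ t) (ν₂ t) = 0 := by rw [hμ t]; exact g_hp_right _ _
    have hgν₁μ : g (ν₁ t) (μ t) = 0 := by rw [g_symm]; exact hgμν₁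
    have hgν₂μ : g (ν₂ t) (μ t) = 0 := by rw [g_symm]; exact hgμν₂
    have hgμμ : g (μ t) (μ t) = δ₁ * δ₂ := by
      rw [hμ t]; exact g_hp_self (hu₁ t ht) (hu₂ t ht) (ho t ht)
    have hν₂ν₁ : g (ν₂ t) (ν₁ t) = 0 := by rw [g_symm]; exact ho t ht
    refine ⟨?_, ?_, ?_⟩
    · rw [Mf_mulVec _ _ _ (hu₁ t ht) hν₂ν₁ hgμν₁, hδ₁sq]
      simp
    · rw [Mf_mulVec _ _ _ (ho t ht) (hu₂ t ht) hgμν₂, hδ₂sq]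
      simp
    · rw [Mf_mulVec _ _ _ hgν₁μ hgν₂μ hgμμ,
        show δ₁ * δ₂ * (δ₁ * δ₂) = (δ₁*δ₁) * (δ₂*δ₂) by ring, hδ₁sq, hδ₂sq]
      simp
  have hm₁ : ∀ t ∈ I, ν₁t t = A.mulVec (ν₁ t) := fun t ht => by
    rw [← hMconst t ht]; exact ((hmap t ht).1).symm
  have hm₂ : ∀ t ∈ I, ν₂t t = A.mulVec (ν₂ t) := fun t ht => by
    rw [← hMconst t ht]; exact ((hmap t ht).2.1).symm
  have hm₃ : ∀ t ∈ I, μt t = A.mulVec (μ t) := fun t ht => by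
    rw [← hMconst t ht]; exact ((hmap t ht).2.2).symm
  -- frame matrices at t₀
  set P : Matrix (Fin 3) (Fin 3) ℝ := Matrix.of ![ν₁ t₀, ν₂ t₀, μ t₀] with hP
  set Q : Matrix (Fin 3) (Fin 3) ℝ := Matrix.of ![ν₁t t₀, ν₂t t₀, μt t₀] with hQ
  set D : Matrix (Fin 3) (Fin 3) ℝ := Matrix.of ![![δ₁,0,0],![0,δ₂,0],![0,0,δ₁*δ₂]] with hD
  -- expanded scalar facts at t₀
  have e11 := hu₁ t₀ ht₀
  have e22 := hu₂ t₀ ht₀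
  have e12 := ho t₀ ht₀
  have e33 : g (μ t₀) (μ t₀) = δ₁ * δ₂ := by
    rw [hμ t₀]; exact g_hp_self (hu₁ t₀ ht₀) (hu₂ t₀ ht₀) (ho t₀ ht₀)
  have e13 : g (ν₁ t₀) (μ t₀) = 0 := by rw [g_symm, hμ t₀]; exact g_hp_left _ _
  have e23 : g (ν₂ t₀) (μ t₀) = 0 := by rw [g_symm, hμ t₀]; exact g_hp_right _ _
  have f11 := hut₁ t₀ ht₀
  have f22 := hut₂ t₀ ht₀
  have f12 := hot t₀ ht₀
  have f33 : g (μt t₀) (μt t₀) = δ₁ * δ₂ := by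
    rw [hμt t₀]; exact g_hp_self (hut₁ t₀ ht₀) (hut₂ t₀ ht₀) (hot t₀ ht₀)
  have f13 : g (ν₁t t₀) (μt t₀) = 0 := by rw [g_symm, hμt t₀]; exact g_hp_left _ _
  have f23 : g (ν₂t t₀) (μt t₀) = 0 := by rw [g_symm, hμt t₀]; exact g_hp_right _ _
  simp only [g] at e11 e22 e12 e33 e13 e23 f11 f22 f12 f33 f13 f23
  have hPG : P * Gmat * Pᵀ = D := by
    ext k lx
    fin_cases k <;> fin_cases lx <;>
      simp only [hP, hD, Matrix.mul_apply, Matrix.transpose_apply, Fin.sum_univ_three,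
        Matrix.of_apply, Gmat, Matrix.cons_val', Matrix.cons_val_zero, Matrix.cons_val_one,
        Matrix.head_cons, Matrix.cons_val_two, Matrix.tail_cons, Matrix.empty_val',
        Matrix.cons_val_fin_one, Matrix.head_fin_const, Fin.zero_eta, Fin.mk_one, Fin.reduceFinMk, Fin.isValue]
    · linear_combination e11
    · linear_combination e12
    · linear_combination e13
    · linear_combination e12
    · linear_combination e22
    · linear_combination e23
    · linear_combination e13
    · linear_combination e23
    · linear_combination e33
  have hQG : Q * Gmat * Qᵀ = D := by
    ext k lx
    fin_cases k <;> fin_cases lx <;>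
      simp only [hQ, hD, Matrix.mul_apply, Matrix.transpose_apply, Fin.sum_univ_three,
        Matrix.of_apply, Gmat, Matrix.cons_val', Matrix.cons_val_zero, Matrix.cons_val_one,
        Matrix.head_cons, Matrix.cons_val_two, Matrix.tail_cons, Matrix.empty_val',
        Matrix.cons_val_fin_one, Matrix.head_fin_const, Fin.zero_eta, Fin.mk_one, Fin.reduceFinMk, Fin.isValue]
    · linear_combination f11
    · linear_combination f12
    · linear_combination f13
    · linear_combination f12
    · linear_combination f22
    · linear_combination f23
    · linear_combination f13
    · linear_combination f23
    · linear_combination f33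
  have hQP : A * Pᵀ = Qᵀ := by
    ext i k
    fin_cases k <;>
      simp only [hP, hQ, Matrix.mul_apply, Matrix.transpose_apply, Fin.sum_univ_three,
        Matrix.of_apply, Matrix.cons_val_zero, Matrix.cons_val_one, Matrix.head_cons,
        Matrix.cons_val_two, Matrix.tail_cons, Fin.zero_eta, Fin.mk_one, Fin.reduceFinMk, Fin.isValue]
    · simpa [Matrix.mulVec, dotProduct, Fin.sum_univ_three]
        using (congrFun (hm₁ t₀ ht₀) i).symm
    · simpa [Matrix.mulVec, dotProduct, Fin.sum_univ_three]
        using (congrFun (hm₂ t₀ ht₀) i).symm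
    · simpa [Matrix.mulVec, dotProduct, Fin.sum_univ_three]
        using (congrFun (hm₃ t₀ ht₀) i).symm
  -- determinants
  have hμ0 := hμ t₀
  have hdetP : P.det = δ₁ * δ₂ := by
    rw [Matrix.det_fin_three]
    simp only [hP, Matrix.of_apply, Matrix.cons_val_zero, Matrix.cons_val_one,
      Matrix.head_cons, Matrix.cons_val_two, Matrix.tail_cons, hμ0, hprod]
    have e33x := e33
    simp only [hμ0, hprod, Matrix.cons_val_zero, Matrix.cons_val_one, Matrix.head_cons,
      Matrix.cons_val_two, Matrix.tail_cons] at e33x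
    linear_combination e33x
  have hμt0 := hμt t₀
  have hdetQ : Q.det = δ₁ * δ₂ := by
    rw [Matrix.det_fin_three]
    simp only [hQ, Matrix.of_apply, Matrix.cons_val_zero, Matrix.cons_val_one,
      Matrix.head_cons, Matrix.cons_val_two, Matrix.tail_cons, hμt0, hprod]
    have f33x := f33
    simp only [hμt0, hprod, Matrix.cons_val_zero, Matrix.cons_val_one, Matrix.head_cons,
      Matrix.cons_val_two, Matrix.tail_cons] at f33x
    linear_combination f33x
  have hPunit : IsUnit P.det := by rw [hdetP]; exact isUnit_iff_ne_zero.mpr hδδ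
  have hPTunit : IsUnit Pᵀ.det := by rwa [Matrix.det_transpose]
  have hdetA : A.det = 1 := by
    have h := congrArg Matrix.det hQP
    rw [Matrix.det_mul, Matrix.det_transpose, Matrix.det_transpose, hdetP, hdetQ] at h
    have h' : A.det * (δ₁ * δ₂) = 1 * (δ₁ * δ₂) := by rw [h, one_mul]
    exact mul_right_cancel₀ hδδ h'
  have hA' : A = Qᵀ * (Pᵀ)⁻¹ := by
    rw [← hQP, Matrix.mul_assoc, Matrix.mul_nonsing_inv _ hPTunit, Matrix.mul_one]
  have hAT : Aᵀ = P⁻¹ * Q := by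
    rw [hA', Matrix.transpose_mul, Matrix.transpose_transpose,
      ← Matrix.transpose_nonsing_inv, Matrix.transpose_transpose]
  have hAGA : Aᵀ * Gmat * A = Gmat := by
    rw [hAT, hA']
    have hQG' : Q * Gmat * Qᵀ = P * Gmat * Pᵀ := hQG.trans hPG.symm
    have hmid : Q * (Gmat * (Qᵀ * (Pᵀ)⁻¹)) = P * (Gmat * (Pᵀ * (Pᵀ)⁻¹)) := by
      have := congrArg (fun X => X * (Pᵀ)⁻¹) hQG'
      simpa [Matrix.mul_assoc] using this
    simp only [Matrix.mul_assoc]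
    rw [hmid, Matrix.mul_nonsing_inv _ hPTunit, Matrix.mul_one,
      ← Matrix.mul_assoc, Matrix.nonsing_inv_mul _ hPunit, Matrix.one_mul]
  -- translation part
  have hγderiv : ∀ s ∈ I, HasDerivAt (fun u => γt u - A.mulVec (γ u)) 0 s := by
    intro s hs
    have hγc : ∀ k, HasDerivAt (fun u => γ u k) ((α s • μ s) k) s :=
      hasDerivAt_pi.mp (hodeγ s hs)
    simp only [Pi.smul_apply, smul_eq_mul] at hγc
    have hAγ : HasDerivAt (fun u => A.mulVec (γ u)) (α s • μt s) s := by
      rw [hasDerivAt_pi]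
      intro i
      have H := (((hγc 0).const_mul (A i 0)).add ((hγc 1).const_mul (A i 1))).add
        ((hγc 2).const_mul (A i 2))
      have hfun : (fun u => A.mulVec (γ u) i)
          = fun u => A i 0 * γ u 0 + A i 1 * γ u 1 + A i 2 * γ u 2 := by
        funext u; simp [Matrix.mulVec, dotProduct, Fin.sum_univ_three]
      rw [hfun]
      refine H.congr_deriv (Eq.symm ?_)
      have := congrFun (hm₃ s hs) i
      simp only [Matrix.mulVec, dotProduct, Fin.sum_univ_three] at this
      simp only [Pi.smul_apply, smul_eq_mul]
      linear_combination α s * this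
    have := (hodetγ s hs).sub hAγ
    exact this.congr_deriv (by simp)
  refine ⟨A, γt t₀ - A.mulVec (γ t₀), hAGA, hdetA, fun t ht => ⟨?_, hm₁ t ht, hm₂ t ht⟩⟩
  have hconst := const_of_derivZero hI hγderiv ht ht₀
  have : γt t - A.mulVec (γ t) = γt t₀ - A.mulVec (γ t₀) := hconst
  funext i
  have := congrFun this i
  simp only [Pi.sub_apply, Pi.add_apply] at this ⊢
  linarith
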